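/- Let A be a Hopf algebra and B a left coideal subalgebra. For any right ideal R of B⁺, the right ideal R_{δ_R} associated to the derivation δ_R satisfies R_{δ_R} ⊆ R; and for any equivariant derivation δ of B, δ_{R_δ} ≤ δ. Consequently the maps R ↦ δ_R and δ ↦ R_δ restrict to mutually inverse, order-reversing bijections between {R_δ : δ equivariant derivation of B} and {δ_R : R right ideal of B⁺}. -/

import Mathlib

open TensorProduct

noncomputable section

/-- A derivation of an algebra `B` into a `B`-bimodule `M`. -/
structure BimodDeriv (B M : Type) [Ring B] [Algebra ℂ B]
    [AddCommGroup M] [Module ℂ M] where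
  l : B →ₗ[ℂ] M →ₗ[ℂ] M
  r : B →ₗ[ℂ] M →ₗ[ℂ] M
  l_mul : ∀ a b m, l (a * b) m = l a (l b m)
  l_one : ∀ m, l 1 m = m
  r_mul : ∀ a b m, r (a * b) m = r b (r a m)
  r_one : ∀ m, r 1 m = m
  lr_comm : ∀ a b m, l a (r b m) = r b (l a m)
  d : B →ₗ[ℂ] M
  leibniz : ∀ a b, d (a * b) = l a (d b) + r b (d a)

variable (A : Type) [Ring A] [HopfAlgebra ℂ A] (B : Subalgebra ℂ A)

/-- The counit of `A` restricted to `B`. -/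
def epsB : ↥B →ₐ[ℂ] ℂ := (Bialgebra.counitAlgHom ℂ A).comp B.val

/-- `B⁺ = B ∩ ker ε`. -/
def Bplus : Submodule ℂ ↥B := LinearMap.ker (epsB A B).toLinearMap

/-- `b ↦ b⁺ = b − ε(b)1` on `B`. -/
def plusB : ↥B →ₗ[ℂ] ↥B :=
  LinearMap.id - (Algebra.linearMap ℂ ↥B).comp (epsB A B).toLinearMap

/-- `a ↦ a⁺ = a − ε(a)1` on `A`. -/
def plusA : A →ₗ[ℂ] A :=
  LinearMap.id - (Algebra.linearMap ℂ A).comp (Coalgebra.counit (R := ℂ))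

/-- `A ⊗ N` as a submodule of `A ⊗ A`. -/
def AOx (N : Submodule ℂ A) : Submodule ℂ (A ⊗[ℂ] A) :=
  LinearMap.range (TensorProduct.map (LinearMap.id : A →ₗ[ℂ] A) N.subtype)

variable (comulB : ↥B →ₗ[ℂ] A ⊗[ℂ] ↥B)

/-- `Φ a b = Σ a·b₍₁₎ ⊗ b₍₂₎⁺ ∈ A ⊗ A`; `Σᵢ aᵢ δ_R bᵢ = 0` iff
`Σᵢ Φ aᵢ bᵢ ∈ A ⊗ R`. -/
def PhiE (a b : ↥B) : A ⊗[ℂ] A :=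
  (TensorProduct.map (LinearMap.mulLeft ℂ (a : A))
    ((plusA A) ∘ₗ B.val.toLinearMap)) (comulB b)

/-- The Sweedler-type map `a ⊗ b ↦ a₍₁₎b₍₁₎ ⊗ a₍₂₎·δ(b₍₂₎)`. -/
def sweedlerMap {M : Type} [AddCommGroup M] [Module ℂ M]
    (δ : BimodDeriv ↥B M) : ↥B ⊗[ℂ] ↥B →ₗ[ℂ] A ⊗[ℂ] M :=
  (TensorProduct.map (LinearMap.mul' ℂ A)
      (TensorProduct.lift
        (LinearMap.mk₂ ℂ (fun a b => δ.l a (δ.d b))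
          (fun a a' b => by simp)
          (fun c a b => by simp)
          (fun a b b' => by simp)
          (fun c a b => by simp)))) ∘ₗ
    (TensorProduct.tensorTensorTensorComm ℂ A ↥B A ↥B).toLinearMap ∘ₗ
    (TensorProduct.map comulB comulB)

/-- Equivariance of a derivation of the left coideal subalgebra `B`. -/
def IsEquivariant {M : Type} [AddCommGroup M] [Module ℂ M]
    (δ : BimodDeriv ↥B M) : Prop :=
  ∀ L : List (↥B × ↥B),
    (L.map fun p => δ.l p.1 (δ.d p.2)).sum = 0 →
    (L.map fun p => sweedlerMap A B comulB δ (p.1 ⊗ₜ[ℂ] p.2)).sum = 0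

/-- `R_δ` for an abstract derivation `δ`. -/
def RdeltaSet {M : Type} [AddCommGroup M] [Module ℂ M]
    (δ : BimodDeriv ↥B M) : Set ↥B :=
  {x | ∃ L : List (↥B × ↥B),
    (L.map fun p => δ.l p.1 (δ.d p.2)).sum = 0 ∧
    x = (L.map fun p => epsB A B p.1 • plusB A B p.2).sum}

/-- `R_{δ_R}` for the derivation `δ_R` associated to a right ideal `R ⊆ B⁺`. -/
def RdeltaRSet (R : Submodule ℂ ↥B) : Set ↥B :=
  {x | ∃ L : List (↥B × ↥B),
    (L.map fun p => PhiE A B comulB p.1 p.2).sum ∈ AOx A (R.map B.val.toLinearMap) ∧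
    x = (L.map fun p => epsB A B p.1 • plusB A B p.2).sum}

section AuxLemmas

variable {α β γ : Type*}

lemma listrep {X Y : Type} [AddCommGroup X] [Module ℂ X] [AddCommGroup Y] [Module ℂ Y]
    (t : X ⊗[ℂ] Y) :
    ∃ L : List (X × Y), (L.map fun q => q.1 ⊗ₜ[ℂ] q.2).sum = t := by
  induction t with
  | zero => exact ⟨[], rfl⟩
  | tmul x y => exact ⟨[(x, y)], by simp⟩
  | add s t hs ht =>
    obtain ⟨L1, h1⟩ := hs
    obtain ⟨L2, h2⟩ := ht
    exact ⟨L1 ++ L2, by rw [List.map_append, List.sum_append, h1, h2]⟩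

lemma lsum {F V W : Type*} [AddCommMonoid V] [AddCommMonoid W] [FunLike F V W]
    [AddMonoidHomClass F V W] (φ : F) (L : List α) (g : α → V) :
    φ (L.map g).sum = (L.map fun a => φ (g a)).sum := by
  rw [map_list_sum, List.map_map]; rfl

lemma listsum_comm [AddCommMonoid γ] (L1 : List α) (L2 : List β) (F : α → β → γ) :
    (L1.map fun a => (L2.map fun b => F a b).sum).sum
      = (L2.map fun b => (L1.map fun a => F a b).sum).sum := by
  induction L1 with
  | nil => simp
  | cons a L ih => simp [List.sum_map_add, ih]

lemma listsum_apply {V W : Type*} [AddCommGroup V] [Module ℂ V] [AddCommGroup W] [Module ℂ W]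
    (L : List α) (F : α → V →ₗ[ℂ] W) (x : V) :
    ((L.map F).sum) x = (L.map fun a => F a x).sum := by
  induction L with
  | nil => simp
  | cons a L ih => simp [ih]

lemma sum_map_flatMap [AddCommMonoid γ] (L : List α) (F : α → List β) (G : β → γ) :
    ((L.flatMap F).map G).sum = (L.map fun a => ((F a).map G).sum).sum := by
  induction L with
  | nil => simp
  | cons a L ih => simp [List.map_append, List.sum_append, ih]

lemma listsum_congr [AddCommMonoid γ] {L : List α} {F G : α → γ}
    (h : ∀ a ∈ L, F a = G a) : (L.map F).sum = (L.map G).sum := by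
  rw [List.map_congr_left h]

lemma listsum_tmul {X Y : Type} [AddCommGroup X] [Module ℂ X] [AddCommGroup Y] [Module ℂ Y]
    (L : List α) (x : α → X) (y : Y) :
    ((L.map x).sum) ⊗ₜ[ℂ] y = (L.map fun a => x a ⊗ₜ[ℂ] y).sum := by
  induction L with
  | nil => simp
  | cons a L ih => simp [TensorProduct.add_tmul, ih]

lemma tmul_listsum {X Y : Type} [AddCommGroup X] [Module ℂ X] [AddCommGroup Y] [Module ℂ Y]
    (x : X) (L : List α) (y : α → Y) :
    x ⊗ₜ[ℂ] ((L.map y).sum) = (L.map fun a => x ⊗ₜ[ℂ] y a).sum := by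
  induction L with
  | nil => simp
  | cons a L ih => simp [TensorProduct.tmul_add, ih]

end AuxLemmas
section SliceLemmas

/-- Slice `A ⊗ X → X` along a functional `f : A →ₗ ℂ`. -/
def sliceT (f : A →ₗ[ℂ] ℂ) (X : Type) [AddCommGroup X] [Module ℂ X] :
    A ⊗[ℂ] X →ₗ[ℂ] X :=
  (TensorProduct.lid ℂ X).toLinearMap ∘ₗ f.rTensor X

@[simp] lemma sliceT_tmul (f : A →ₗ[ℂ] ℂ) {X : Type} [AddCommGroup X] [Module ℂ X]
    (x : A) (m : X) : sliceT A f X (x ⊗ₜ[ℂ] m) = f x • m := by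
  simp [sliceT]

lemma sliceT_natural (f : A →ₗ[ℂ] ℂ) {X Y : Type} [AddCommGroup X] [Module ℂ X]
    [AddCommGroup Y] [Module ℂ Y] (g : X →ₗ[ℂ] Y) (u : A ⊗[ℂ] X) :
    sliceT A f Y (TensorProduct.map LinearMap.id g u) = g (sliceT A f X u) := by
  induction u with
  | zero => simp
  | tmul x m => simp
  | add s t hs ht => simp [hs, ht]

lemma AOx_mono {N N' : Submodule ℂ A} (h : N ≤ N') : AOx A N ≤ AOx A N' := by
  rintro t ⟨u, rfl⟩
  refine ⟨TensorProduct.map LinearMap.id (Submodule.inclusion h) u, ?_⟩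
  have e : TensorProduct.map (LinearMap.id : A →ₗ[ℂ] A) N'.subtype ∘ₗ
      TensorProduct.map LinearMap.id (Submodule.inclusion h)
      = TensorProduct.map LinearMap.id N.subtype := by
    rw [← TensorProduct.map_comp, LinearMap.id_comp, Submodule.subtype_comp_inclusion]
  rw [← e, LinearMap.comp_apply]

lemma sliceT_mem_AOx {N : Submodule ℂ A} (f : A →ₗ[ℂ] ℂ) {t : A ⊗[ℂ] A}
    (ht : t ∈ AOx A N) : sliceT A f A t ∈ N := by
  obtain ⟨u, rfl⟩ := ht
  rw [sliceT_natural]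
  exact (sliceT A f N u).2

lemma rTensor_mem_AOx {N : Submodule ℂ A} (g : A →ₗ[ℂ] A) {t : A ⊗[ℂ] A}
    (ht : t ∈ AOx A N) : g.rTensor A t ∈ AOx A N := by
  obtain ⟨u, rfl⟩ := ht
  refine ⟨g.rTensor N u, ?_⟩
  have e : TensorProduct.map (LinearMap.id : A →ₗ[ℂ] A) N.subtype ∘ₗ g.rTensor N
      = g.rTensor A ∘ₗ TensorProduct.map LinearMap.id N.subtype := by
    apply TensorProduct.ext'
    intro x y
    simp
  calc TensorProduct.map LinearMap.id N.subtype (g.rTensor N u)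
      = (TensorProduct.map (LinearMap.id : A →ₗ[ℂ] A) N.subtype ∘ₗ g.rTensor N) u := rfl
    _ = g.rTensor A (TensorProduct.map LinearMap.id N.subtype u) := by rw [e]; rfl

lemma mem_AOx_of_slices {N : Submodule ℂ A} {t : A ⊗[ℂ] A}
    (h : ∀ f : A →ₗ[ℂ] ℂ, sliceT A f A t ∈ N) : t ∈ AOx A N := by
  classical
  set bA := Module.Basis.ofVectorSpace ℂ A with hbA
  set e : A ⊗[ℂ] A ≃ₗ[ℂ] (Module.Basis.ofVectorSpaceIndex ℂ A →₀ A) :=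
    (TensorProduct.congr bA.repr (LinearEquiv.refl ℂ A)).trans
      (TensorProduct.finsuppScalarLeft ℂ A _) with he
  have hcoord : ∀ (s : A ⊗[ℂ] A) i, e s i = sliceT A (bA.coord i) A s := by
    intro s
    induction s with
    | zero => intro i; simp
    | tmul x y => intro i; simp [he, Module.Basis.coord_apply]
    | add s t hs ht => intro i; simp [hs, ht]
  have hsymm : ∀ g : Module.Basis.ofVectorSpaceIndex ℂ A →₀ A,
      (∀ i, g i ∈ N) → e.symm g ∈ AOx A N := by
    intro g hg
    have hgs : g = g.sum fun i v => Finsupp.single i v := (Finsupp.sum_single g).symm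
    rw [hgs, map_finsuppSum]
    apply Submodule.sum_mem
    intro i _
    have hv : e.symm (Finsupp.single i (g i)) = bA i ⊗ₜ[ℂ] (g i) := by
      simp [he, Module.Basis.repr_symm_single_one]
    show e.symm (Finsupp.single i (g i)) ∈ AOx A N
    rw [hv]
    exact ⟨bA i ⊗ₜ[ℂ] ⟨g i, hg i⟩, by simp⟩
  have ht : t = e.symm (e t) := (e.symm_apply_apply t).symm
  rw [ht]
  exact hsymm _ fun i => by rw [hcoord]; exact h _

end SliceLemmas
section CounitLemmas

variable {A B comulB} in
lemma eps_fst_sum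
    (hcB : ∀ b : ↥B, (TensorProduct.map LinearMap.id B.val.toLinearMap) (comulB b)
        = Coalgebra.comul (b : A))
    (b : ↥B) (L : List (A × ↥B))
    (hL : (L.map fun q => q.1 ⊗ₜ[ℂ] q.2).sum = comulB b) :
    (L.map fun q => epsB A B q.2 • q.1).sum = (b : A) := by
  have h1 : ((TensorProduct.rid ℂ A).toLinearMap ∘ₗ
        LinearMap.lTensor A (Coalgebra.counit (R := ℂ)) ∘ₗ
        TensorProduct.map LinearMap.id B.val.toLinearMap)
        ((L.map fun q => q.1 ⊗ₜ[ℂ] q.2).sum) = (b : A) := by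
    rw [hL]
    simp only [LinearMap.comp_apply, hcB b, Coalgebra.lTensor_counit_comul]
    simp
  rw [lsum] at h1
  rw [← h1]
  congr 1

variable {A B comulB} in
lemma counit_fst_sum
    (hcB : ∀ b : ↥B, (TensorProduct.map LinearMap.id B.val.toLinearMap) (comulB b)
        = Coalgebra.comul (b : A))
    (b : ↥B) (L : List (A × ↥B))
    (hL : (L.map fun q => q.1 ⊗ₜ[ℂ] q.2).sum = comulB b) :
    (L.map fun q => Coalgebra.counit (R := ℂ) q.1 • q.2).sum = b := by
  apply Subtype.val_injective
  have hn : B.val.toLinearMap ∘ₗ sliceT A (Coalgebra.counit (R := ℂ)) ↥B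
      = sliceT A (Coalgebra.counit (R := ℂ)) A ∘ₗ
          TensorProduct.map LinearMap.id B.val.toLinearMap := by
    apply TensorProduct.ext'
    intro x y
    simp
  have h1 : B.val.toLinearMap (sliceT A (Coalgebra.counit (R := ℂ)) ↥B (comulB b))
      = (b : A) := by
    rw [← LinearMap.comp_apply, hn, LinearMap.comp_apply, hcB b]
    simp [sliceT, Coalgebra.rTensor_counit_comul]
  have h2 : sliceT A (Coalgebra.counit (R := ℂ)) ↥B (comulB b)
      = (L.map fun q => Coalgebra.counit (R := ℂ) q.1 • q.2).sum := by
    rw [← hL, lsum]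
    congr 1
  show B.val.toLinearMap _ = (b : A)
  rw [← h2]
  exact h1

variable {A B comulB} in
lemma comul_val_list
    (hcB : ∀ b : ↥B, (TensorProduct.map LinearMap.id B.val.toLinearMap) (comulB b)
        = Coalgebra.comul (b : A))
    (b : ↥B) (L : List (A × ↥B))
    (hL : (L.map fun q => q.1 ⊗ₜ[ℂ] q.2).sum = comulB b) :
    Coalgebra.comul (R := ℂ) (b : A) = (L.map fun q => q.1 ⊗ₜ[ℂ] (q.2 : A)).sum := by
  rw [← hcB b, ← hL, lsum]
  congr 1

variable {A B comulB} in
lemma coassoc_comulB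
    (hcB : ∀ b : ↥B, (TensorProduct.map LinearMap.id B.val.toLinearMap) (comulB b)
        = Coalgebra.comul (b : A))
    (b : ↥B) :
    LinearMap.lTensor A comulB (comulB b)
      = TensorProduct.assoc ℂ A A ↥B
          ((Coalgebra.comul (R := ℂ)).rTensor ↥B (comulB b)) := by
  have hval : Function.Injective B.val.toLinearMap := Subtype.val_injective
  apply Module.Flat.lTensor_preserves_injective_linearMap (M := A)
      (LinearMap.lTensor A B.val.toLinearMap)
      (Module.Flat.lTensor_preserves_injective_linearMap (M := A) _ hval)
  have hcomB : LinearMap.lTensor A B.val.toLinearMap ∘ₗ comulB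
      = ((Coalgebra.comul (R := ℂ) : A →ₗ[ℂ] A ⊗[ℂ] A) ∘ₗ B.val.toLinearMap) := by
    ext c
    exact hcB c
  have e1 : LinearMap.lTensor A (LinearMap.lTensor A B.val.toLinearMap)
        (LinearMap.lTensor A comulB (comulB b))
      = LinearMap.lTensor A (Coalgebra.comul (R := ℂ))
          (Coalgebra.comul (R := ℂ) (b : A)) := by
    rw [← LinearMap.comp_apply, ← LinearMap.lTensor_comp, hcomB, LinearMap.lTensor_comp,
      LinearMap.comp_apply]
    congr 1
    exact hcB b
  have e2 : LinearMap.lTensor A (LinearMap.lTensor A B.val.toLinearMap)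
        (TensorProduct.assoc ℂ A A ↥B
          ((Coalgebra.comul (R := ℂ)).rTensor ↥B (comulB b)))
      = TensorProduct.assoc ℂ A A A
          ((Coalgebra.comul (R := ℂ)).rTensor A (Coalgebra.comul (R := ℂ) (b : A))) := by
    rw [show LinearMap.lTensor A (LinearMap.lTensor A B.val.toLinearMap)
        = TensorProduct.map LinearMap.id (TensorProduct.map LinearMap.id B.val.toLinearMap)
        from rfl,
      TensorProduct.map_map_assoc]
    congr 1
    rw [TensorProduct.map_id]
    rw [show (TensorProduct.map (LinearMap.id : A ⊗[ℂ] A →ₗ[ℂ] A ⊗[ℂ] A) B.val.toLinearMap)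
          ((Coalgebra.comul (R := ℂ)).rTensor ↥B (comulB b))
        = ((B.val.toLinearMap.lTensor (A ⊗[ℂ] A)) ∘ₗ
            ((Coalgebra.comul (R := ℂ)).rTensor ↥B)) (comulB b) from rfl,
      LinearMap.lTensor_comp_rTensor, ← LinearMap.rTensor_comp_lTensor,
      LinearMap.comp_apply]
    congr 1
    exact hcB b
  rw [e1, e2]
  exact (Coalgebra.coassoc_apply (R := ℂ) (b : A)).symm

end CounitLemmas
section PhiLemmas

variable {A B comulB} in
lemma PhiE_smul (c : ℂ) (x y : ↥B) :
    PhiE A B comulB (c • x) y = c • PhiE A B comulB x y := by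
  have e : TensorProduct.map (LinearMap.mulLeft ℂ ((c • x : ↥B) : A))
        ((plusA A) ∘ₗ B.val.toLinearMap)
      = c • TensorProduct.map (LinearMap.mulLeft ℂ (x : A))
        ((plusA A) ∘ₗ B.val.toLinearMap) := by
    apply TensorProduct.ext'
    intro u v
    simp [smul_mul_assoc, TensorProduct.smul_tmul']
  unfold PhiE
  rw [e, LinearMap.smul_apply]

variable {A B comulB} in
lemma PhiE_expand (a b : ↥B) (Lb : List (A × ↥B))
    (hLb : (Lb.map fun q => q.1 ⊗ₜ[ℂ] q.2).sum = comulB b) :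
    PhiE A B comulB a b
      = (Lb.map fun r => ((a : A) * r.1) ⊗ₜ[ℂ] plusA A (r.2 : A)).sum := by
  unfold PhiE
  rw [← hLb, lsum]
  congr 1

variable {A B comulB} in
lemma sliceT_PhiE (f : A →ₗ[ℂ] ℂ) (a b : ↥B) (Lb : List (A × ↥B))
    (hLb : (Lb.map fun q => q.1 ⊗ₜ[ℂ] q.2).sum = comulB b) :
    sliceT A f A (PhiE A B comulB a b)
      = (Lb.map fun r => f ((a : A) * r.1) • plusA A (r.2 : A)).sum := by
  rw [PhiE_expand a b Lb hLb, lsum]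
  congr 1

variable {A B} in
lemma val_plusB (x : ↥B) : ((plusB A B x : ↥B) : A) = plusA A (x : A) := by
  simp [plusB, plusA, epsB]

variable {A B comulB} in
lemma sliceT_counit_PhiE
    (hcB : ∀ b : ↥B, (TensorProduct.map LinearMap.id B.val.toLinearMap) (comulB b)
        = Coalgebra.comul (b : A))
    (a b : ↥B) :
    sliceT A (Coalgebra.counit (R := ℂ)) A (PhiE A B comulB a b)
      = B.val.toLinearMap (epsB A B a • plusB A B b) := by
  obtain ⟨Lb, hLb⟩ := listrep (comulB b)
  rw [sliceT_PhiE (Coalgebra.counit (R := ℂ)) a b Lb hLb]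
  have hb := counit_fst_sum hcB b Lb hLb
  have e : B.val.toLinearMap (epsB A B a • plusB A B b)
      = Coalgebra.counit (R := ℂ) (a : A) •
          plusA A (B.val.toLinearMap
            ((Lb.map fun q => Coalgebra.counit (R := ℂ) q.1 • q.2).sum)) := by
    rw [hb]
    simp [epsB, val_plusB]
  rw [e, lsum B.val.toLinearMap, lsum (plusA A), List.smul_sum, List.map_map]
  congr 1
  apply List.map_congr_left
  intro r _
  simp [Bialgebra.counit_mul, mul_smul, Function.comp_def]

variable {A B comulB} in
lemma sliceT_PhiE_val
    (hcB : ∀ b : ↥B, (TensorProduct.map LinearMap.id B.val.toLinearMap) (comulB b)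
        = Coalgebra.comul (b : A))
    (f : A →ₗ[ℂ] ℂ) (a b : ↥B) (La Lb : List (A × ↥B))
    (hLa : (La.map fun q => q.1 ⊗ₜ[ℂ] q.2).sum = comulB a)
    (hLb : (Lb.map fun q => q.1 ⊗ₜ[ℂ] q.2).sum = comulB b) :
    sliceT A f A (PhiE A B comulB a b)
      = B.val.toLinearMap ((La.map fun q => (Lb.map fun r =>
          epsB A B (f (q.1 * r.1) • q.2) • plusB A B r.2).sum).sum) := by
  set h : A →ₗ[ℂ] A := (Lb.map fun r =>
      LinearMap.toSpanSingleton ℂ A (plusA A (r.2 : A)) ∘ₗ f ∘ₗ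
        LinearMap.mulRight ℂ r.1).sum with hh
  have happ : ∀ x : A, h x = (Lb.map fun r => f (x * r.1) • plusA A (r.2 : A)).sum := by
    intro x
    rw [hh, listsum_apply]
    congr 1
  have hval : ∀ q : A × ↥B,
      B.val.toLinearMap ((Lb.map fun r =>
          epsB A B (f (q.1 * r.1) • q.2) • plusB A B r.2).sum)
        = epsB A B q.2 • h q.1 := by
    intro q
    rw [lsum B.val.toLinearMap, happ, List.smul_sum, List.map_map]
    congr 1
    apply List.map_congr_left
    intro r _
    simp only [Function.comp_def, map_smul, smul_eq_mul, LinearMap.smul_apply]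
    rw [show B.val.toLinearMap ((plusB A B) r.2) = plusA A (r.2 : A) from val_plusB r.2,
      smul_smul, mul_comm]
  rw [sliceT_PhiE f a b Lb hLb, ← happ, lsum B.val.toLinearMap]
  have e1 : (La.map fun q => B.val.toLinearMap ((Lb.map fun r =>
        epsB A B (f (q.1 * r.1) • q.2) • plusB A B r.2).sum)).sum
      = (La.map fun q => epsB A B q.2 • h q.1).sum := by
    congr 1
    apply List.map_congr_left
    intro q _
    exact hval q
  have e2 : (La.map fun q => epsB A B q.2 • h q.1).sum
      = h ((La.map fun q => epsB A B q.2 • q.1).sum) := by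
    rw [lsum h]
    congr 1
    apply List.map_congr_left
    intro q _
    rw [map_smul]
  rw [e1, e2, eps_fst_sum hcB a La hLa]

end PhiLemmas
section ClaimA

variable {A B comulB} in
lemma claimA
    (hcB : ∀ b : ↥B, (TensorProduct.map LinearMap.id B.val.toLinearMap) (comulB b)
        = Coalgebra.comul (b : A))
    (f : A →ₗ[ℂ] ℂ) (a b : ↥B) (La Lb : List (A × ↥B))
    (hLa : (La.map fun q => q.1 ⊗ₜ[ℂ] q.2).sum = comulB a)
    (hLb : (Lb.map fun q => q.1 ⊗ₜ[ℂ] q.2).sum = comulB b) :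
    (La.map fun q => (Lb.map fun r =>
        f (q.1 * r.1) • PhiE A B comulB q.2 r.2).sum).sum
      = LinearMap.rTensor A (sliceT A f A ∘ₗ (Coalgebra.comul (R := ℂ) : A →ₗ[ℂ] A ⊗[ℂ] A))
          (PhiE A B comulB a b) := by
  set g : A →ₗ[ℂ] A :=
    sliceT A f A ∘ₗ (Coalgebra.comul (R := ℂ) : A →ₗ[ℂ] A ⊗[ℂ] A) with hg
  -- expansion of the lTensor of comulB
  have elT : LinearMap.lTensor A comulB (comulB b)
      = (Lb.map fun r => r.1 ⊗ₜ[ℂ] comulB r.2).sum := by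
    rw [← hLb, lsum]
    congr 1
  -- step 1 : inner sums as a linear map applied to `lTensor comulB (comulB b)`
  have step1 : ∀ q : A × ↥B,
      (Lb.map fun r => f (q.1 * r.1) • PhiE A B comulB q.2 r.2).sum
        = ((TensorProduct.map (LinearMap.mulLeft ℂ (q.2 : A))
              ((plusA A) ∘ₗ B.val.toLinearMap)) ∘ₗ
            sliceT A (f ∘ₗ LinearMap.mulLeft ℂ q.1) (A ⊗[ℂ] ↥B))
            (LinearMap.lTensor A comulB (comulB b)) := by
    intro q
    rw [elT, lsum]
    congr 1
    apply List.map_congr_left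
    intro r _
    rw [LinearMap.comp_apply, sliceT_tmul, map_smul]
    rfl
  -- step 2 : rewrite using coassociativity and an associator identity
  have key : ∀ q : A × ↥B,
      ((TensorProduct.map (LinearMap.mulLeft ℂ (q.2 : A))
            ((plusA A) ∘ₗ B.val.toLinearMap)) ∘ₗ
          sliceT A (f ∘ₗ LinearMap.mulLeft ℂ q.1) (A ⊗[ℂ] ↥B)) ∘ₗ
        (TensorProduct.assoc ℂ A A ↥B).toLinearMap
      = TensorProduct.map
          (sliceT A f A ∘ₗ LinearMap.mulLeft ℂ (q.1 ⊗ₜ[ℂ] (q.2 : A)))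
          ((plusA A) ∘ₗ B.val.toLinearMap) := by
    intro q
    apply TensorProduct.ext_threefold
    intro x y z
    simp [sliceT, Algebra.TensorProduct.tmul_mul_tmul, TensorProduct.smul_tmul']
  have erT : (Coalgebra.comul (R := ℂ)).rTensor ↥B (comulB b)
      = (Lb.map fun r => (Coalgebra.comul (R := ℂ) r.1) ⊗ₜ[ℂ] r.2).sum := by
    rw [← hLb, lsum]
    congr 1
  have e4 : ∀ r : A × ↥B,
      (La.map fun q => (sliceT A f A ∘ₗ LinearMap.mulLeft ℂ (q.1 ⊗ₜ[ℂ] (q.2 : A)))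
          (Coalgebra.comul (R := ℂ) r.1)).sum
        = g ((a : A) * r.1) := by
    intro r
    rw [hg, LinearMap.comp_apply, Bialgebra.comul_mul,
      comul_val_list hcB a La hLa]
    rw [show ((La.map fun q => q.1 ⊗ₜ[ℂ] (q.2 : A)).sum) * Coalgebra.comul (R := ℂ) r.1
        = (LinearMap.mulRight ℂ (Coalgebra.comul (R := ℂ) r.1))
            ((La.map fun q => q.1 ⊗ₜ[ℂ] (q.2 : A)).sum) from rfl,
      lsum (LinearMap.mulRight ℂ (Coalgebra.comul (R := ℂ) r.1)),
      lsum (sliceT A f A)]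
    congr 1
  calc (La.map fun q => (Lb.map fun r =>
          f (q.1 * r.1) • PhiE A B comulB q.2 r.2).sum).sum
      = (La.map fun q => (Lb.map fun r =>
          ((sliceT A f A ∘ₗ LinearMap.mulLeft ℂ (q.1 ⊗ₜ[ℂ] (q.2 : A)))
            (Coalgebra.comul (R := ℂ) r.1)) ⊗ₜ[ℂ] plusA A (r.2 : A)).sum).sum := by
        congr 1
        apply List.map_congr_left
        intro q _
        rw [step1 q, coassoc_comulB hcB b,
          show ((TensorProduct.map (LinearMap.mulLeft ℂ (q.2 : A))
              ((plusA A) ∘ₗ B.val.toLinearMap)) ∘ₗ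
            sliceT A (f ∘ₗ LinearMap.mulLeft ℂ q.1) (A ⊗[ℂ] ↥B))
            ((TensorProduct.assoc ℂ A A ↥B)
              ((Coalgebra.comul (R := ℂ)).rTensor ↥B (comulB b)))
          = (((TensorProduct.map (LinearMap.mulLeft ℂ (q.2 : A))
              ((plusA A) ∘ₗ B.val.toLinearMap)) ∘ₗ
            sliceT A (f ∘ₗ LinearMap.mulLeft ℂ q.1) (A ⊗[ℂ] ↥B)) ∘ₗ
            (TensorProduct.assoc ℂ A A ↥B).toLinearMap)
              ((Coalgebra.comul (R := ℂ)).rTensor ↥B (comulB b)) from rfl,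
          key q, erT, lsum]
        congr 1
    _ = (Lb.map fun r => (La.map fun q =>
          ((sliceT A f A ∘ₗ LinearMap.mulLeft ℂ (q.1 ⊗ₜ[ℂ] (q.2 : A)))
            (Coalgebra.comul (R := ℂ) r.1)) ⊗ₜ[ℂ] plusA A (r.2 : A)).sum).sum :=
        listsum_comm La Lb _
    _ = (Lb.map fun r => g ((a : A) * r.1) ⊗ₜ[ℂ] plusA A (r.2 : A)).sum := by
        congr 1
        apply List.map_congr_left
        intro r _
        rw [← e4 r, ← listsum_tmul]
    _ = LinearMap.rTensor A g (PhiE A B comulB a b) := by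
        rw [PhiE_expand a b Lb hLb, lsum]
        congr 1

end ClaimA
section Sweedler

variable {A B comulB} in
lemma sweedler_expand {M : Type} [AddCommGroup M] [Module ℂ M] (δ : BimodDeriv ↥B M)
    (a b : ↥B) (La Lb : List (A × ↥B))
    (hLa : (La.map fun q => q.1 ⊗ₜ[ℂ] q.2).sum = comulB a)
    (hLb : (Lb.map fun q => q.1 ⊗ₜ[ℂ] q.2).sum = comulB b) :
    sweedlerMap A B comulB δ (a ⊗ₜ[ℂ] b)
      = (La.map fun q => (Lb.map fun r =>
          (q.1 * r.1) ⊗ₜ[ℂ] (δ.l q.2 (δ.d r.2))).sum).sum := by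
  set Ψ : (A ⊗[ℂ] ↥B) ⊗[ℂ] (A ⊗[ℂ] ↥B) →ₗ[ℂ] A ⊗[ℂ] M :=
    (TensorProduct.map (LinearMap.mul' ℂ A)
      (TensorProduct.lift
        (LinearMap.mk₂ ℂ (fun a b => δ.l a (δ.d b))
          (fun a a' b => by simp)
          (fun c a b => by simp)
          (fun a b b' => by simp)
          (fun c a b => by simp)))) ∘ₗ
      (TensorProduct.tensorTensorTensorComm ℂ A ↥B A ↥B).toLinearMap with hΨ
  have h0 : sweedlerMap A B comulB δ (a ⊗ₜ[ℂ] b) = Ψ (comulB a ⊗ₜ[ℂ] comulB b) := by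
    simp [sweedlerMap, hΨ]
  rw [h0, ← hLa, ← hLb, listsum_tmul, lsum Ψ]
  congr 1
  apply List.map_congr_left
  intro q _
  rw [tmul_listsum, lsum Ψ]
  congr 1

end Sweedler
section CoreSlim

variable {A B comulB} in
lemma coreSlim
    (hcB : ∀ b : ↥B, (TensorProduct.map LinearMap.id B.val.toLinearMap) (comulB b)
        = Coalgebra.comul (b : A))
    (L : List (↥B × ↥B)) (f : A →ₗ[ℂ] ℂ) :
    ∃ Lf : List (↥B × ↥B),
      ((Lf.map fun p => PhiE A B comulB p.1 p.2).sum
          = LinearMap.rTensor A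
              (sliceT A f A ∘ₗ (Coalgebra.comul (R := ℂ) : A →ₗ[ℂ] A ⊗[ℂ] A))
              ((L.map fun p => PhiE A B comulB p.1 p.2).sum)) ∧
      (B.val.toLinearMap ((Lf.map fun p => epsB A B p.1 • plusB A B p.2).sum)
          = sliceT A f A ((L.map fun p => PhiE A B comulB p.1 p.2).sum)) ∧
      (∀ (M : Type) (_ : AddCommGroup M) (_ : Module ℂ M) (δ : BimodDeriv ↥B M),
        (Lf.map fun p => δ.l p.1 (δ.d p.2)).sum
          = sliceT A f M
              ((L.map fun p => sweedlerMap A B comulB δ (p.1 ⊗ₜ[ℂ] p.2)).sum)) := by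
  classical
  choose rep hrep using fun t : A ⊗[ℂ] ↥B => listrep t
  refine ⟨L.flatMap fun p => (rep (comulB p.1)).flatMap fun q =>
      (rep (comulB p.2)).map fun r => ((f (q.1 * r.1) • q.2 : ↥B), r.2), ?_, ?_, ?_⟩
  · rw [sum_map_flatMap, lsum (LinearMap.rTensor A
        (sliceT A f A ∘ₗ (Coalgebra.comul (R := ℂ) : A →ₗ[ℂ] A ⊗[ℂ] A)))]
    congr 1
    apply List.map_congr_left
    intro p _
    rw [sum_map_flatMap,
      ← claimA hcB f p.1 p.2 (rep (comulB p.1)) (rep (comulB p.2))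
        (hrep (comulB p.1)) (hrep (comulB p.2))]
    congr 1
    apply List.map_congr_left
    intro q _
    rw [List.map_map]
    congr 1
    apply List.map_congr_left
    intro r _
    simp [Function.comp_def, PhiE_smul]
  · rw [sum_map_flatMap, lsum B.val.toLinearMap, lsum (sliceT A f A)]
    congr 1
    apply List.map_congr_left
    intro p _
    rw [sliceT_PhiE_val hcB f p.1 p.2 (rep (comulB p.1)) (rep (comulB p.2))
        (hrep (comulB p.1)) (hrep (comulB p.2)),
      sum_map_flatMap]
    congr 1
    apply listsum_congr
    intro q _
    rw [List.map_map]
    apply listsum_congr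
    intro r _
    rfl
  · intro M _ _ δ
    rw [sum_map_flatMap, lsum (sliceT A f M)]
    congr 1
    apply List.map_congr_left
    intro p _
    rw [sweedler_expand δ p.1 p.2 (rep (comulB p.1)) (rep (comulB p.2))
        (hrep (comulB p.1)) (hrep (comulB p.2)),
      lsum (sliceT A f M), sum_map_flatMap]
    congr 1
    apply List.map_congr_left
    intro q _
    rw [List.map_map, lsum (sliceT A f M)]
    congr 1
    apply List.map_congr_left
    intro r _
    simp [Function.comp_def, map_smul]

end CoreSlim
section Cores

variable {A B comulB} in
lemma coreC
    (hcB : ∀ b : ↥B, (TensorProduct.map LinearMap.id B.val.toLinearMap) (comulB b)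
        = Coalgebra.comul (b : A))
    (N : Submodule ℂ ↥B) (L : List (↥B × ↥B))
    (hmem : (L.map fun p => PhiE A B comulB p.1 p.2).sum
        ∈ AOx A (N.map B.val.toLinearMap)) :
    (L.map fun p => epsB A B p.1 • plusB A B p.2).sum ∈ N := by
  have h1 : B.val.toLinearMap ((L.map fun p => epsB A B p.1 • plusB A B p.2).sum)
      = sliceT A (Coalgebra.counit (R := ℂ)) A
          ((L.map fun p => PhiE A B comulB p.1 p.2).sum) := by
    rw [lsum B.val.toLinearMap, lsum (sliceT A (Coalgebra.counit (R := ℂ)) A)]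
    apply listsum_congr
    intro p _
    exact (sliceT_counit_PhiE hcB p.1 p.2).symm
  have h2 := sliceT_mem_AOx A (Coalgebra.counit (R := ℂ)) hmem
  rw [← h1] at h2
  obtain ⟨y, hy, hvy⟩ := h2
  have he : y = (L.map fun p => epsB A B p.1 • plusB A B p.2).sum :=
    Subtype.val_injective hvy
  rwa [← he]

variable {A B comulB} in
lemma coreD
    (hcB : ∀ b : ↥B, (TensorProduct.map LinearMap.id B.val.toLinearMap) (comulB b)
        = Coalgebra.comul (b : A))
    {M : Type} [AddCommGroup M] [Module ℂ M] (δ : BimodDeriv ↥B M)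
    (hequiv : IsEquivariant A B comulB δ) (L : List (↥B × ↥B))
    (hL : (L.map fun p => δ.l p.1 (δ.d p.2)).sum = 0) :
    (L.map fun p => PhiE A B comulB p.1 p.2).sum
      ∈ AOx A ((Submodule.span ℂ (RdeltaSet A B δ)).map B.val.toLinearMap) := by
  apply mem_AOx_of_slices
  intro f
  obtain ⟨Lf, _, h2, h3⟩ := coreSlim hcB L f
  rw [← h2]
  refine Submodule.mem_map_of_mem (Submodule.subset_span ⟨Lf, ?_, rfl⟩)
  rw [h3 M _ _ δ, hequiv L hL, map_zero]

variable {A B comulB} in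
lemma coreF
    (hcB : ∀ b : ↥B, (TensorProduct.map LinearMap.id B.val.toLinearMap) (comulB b)
        = Coalgebra.comul (b : A))
    (R : Submodule ℂ ↥B) (L : List (↥B × ↥B))
    (hmem : (L.map fun p => PhiE A B comulB p.1 p.2).sum
        ∈ AOx A (R.map B.val.toLinearMap)) :
    (L.map fun p => PhiE A B comulB p.1 p.2).sum
      ∈ AOx A ((Submodule.span ℂ (RdeltaRSet A B comulB R)).map B.val.toLinearMap) := by
  apply mem_AOx_of_slices
  intro f
  obtain ⟨Lf, h1, h2, _⟩ := coreSlim hcB L f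
  rw [← h2]
  refine Submodule.mem_map_of_mem (Submodule.subset_span ⟨Lf, ?_, rfl⟩)
  rw [h1]
  exact rTensor_mem_AOx A _ hmem

/-- `R_δ` is a submodule. -/
def RdeltaSub {M : Type} [AddCommGroup M] [Module ℂ M]
    (δ : BimodDeriv ↥B M) : Submodule ℂ ↥B where
  carrier := RdeltaSet A B δ
  zero_mem' := ⟨[], by simp, by simp⟩
  add_mem' := by
    rintro x y ⟨L1, h1, e1⟩ ⟨L2, h2, e2⟩
    exact ⟨L1 ++ L2, by
        rw [List.map_append, List.sum_append, h1, h2, add_zero], by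
        rw [List.map_append, List.sum_append, e1, e2]⟩
  smul_mem' := by
    rintro c x ⟨L, h, e⟩
    refine ⟨L.map fun p => (c • p.1, p.2), ?_, ?_⟩
    · have h2 : ((L.map fun p : ↥B × ↥B => (c • p.1, p.2)).map
            fun p => δ.l p.1 (δ.d p.2)).sum
          = c • (L.map fun p => δ.l p.1 (δ.d p.2)).sum := by
        rw [List.smul_sum, List.map_map, List.map_map]
        apply listsum_congr
        intro p _
        simp [Function.comp_def, map_smul]
      rw [h2, h, smul_zero]
    · have h2 : ((L.map fun p : ↥B × ↥B => (c • p.1, p.2)).map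
            fun p => epsB A B p.1 • plusB A B p.2).sum
          = c • (L.map fun p => epsB A B p.1 • plusB A B p.2).sum := by
        rw [List.smul_sum, List.map_map, List.map_map]
        apply listsum_congr
        intro p _
        simp [Function.comp_def, map_smul, smul_smul]
      rw [h2, ← e]

variable {A B} in
lemma span_RdeltaSet {M : Type} [AddCommGroup M] [Module ℂ M]
    (δ : BimodDeriv ↥B M) :
    Submodule.span ℂ (RdeltaSet A B δ) = RdeltaSub A B δ := by
  rw [show RdeltaSet A B δ = ↑(RdeltaSub A B δ) from rfl, Submodule.span_eq]

end Cores
/-- Theorem 1 (iii): `R_{δ_R} ⊆ R` for every right ideal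
`R ⊆ B⁺`, and `δ_{R_δ} ≤ δ` for every equivariant derivation `δ`;
both assignments are order-reversing, and consequently `R ↦ δ_R`,
`δ ↦ R_δ` are mutually inverse bijections between `{R_δ}` and `{δ_R}`:
`R_{δ_{R_δ}} = R_δ` and `δ_{R_{δ_R}} = δ_R`. -/
theorem Galois_correspondence_right_ideals_equivariant_derivations
    (hcomulB : ∀ b : ↥B,
      (TensorProduct.map LinearMap.id B.val.toLinearMap) (comulB b)
        = Coalgebra.comul (b : A)) :
    -- (a) order reversal for ideals: R ⊆ R' implies δ_{R'} ≤ δ_R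
    (∀ R R' : Submodule ℂ ↥B, R ≤ Bplus A B → R' ≤ Bplus A B →
      (∀ x ∈ R, ∀ b ∈ Bplus A B, x * b ∈ R) →
      (∀ x ∈ R', ∀ b ∈ Bplus A B, x * b ∈ R') → R ≤ R' →
      ∀ L : List (↥B × ↥B),
        (L.map fun p => PhiE A B comulB p.1 p.2).sum
            ∈ AOx A (R.map B.val.toLinearMap) →
        (L.map fun p => PhiE A B comulB p.1 p.2).sum
            ∈ AOx A (R'.map B.val.toLinearMap)) ∧
    -- (b) order reversal for derivations: δ' ≤ δ implies R_δ ⊆ R_{δ'}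
    (∀ (M M' : Type) (_ : AddCommGroup M) (_ : Module ℂ M)
        (_ : AddCommGroup M') (_ : Module ℂ M')
        (δ : BimodDeriv ↥B M) (δ' : BimodDeriv ↥B M'),
      (∀ L : List (↥B × ↥B),
        (L.map fun p => δ.l p.1 (δ.d p.2)).sum = 0 →
        (L.map fun p => δ'.l p.1 (δ'.d p.2)).sum = 0) →
      RdeltaSet A B δ ⊆ RdeltaSet A B δ') ∧
    -- (c) `R_{δ_R} ⊆ R`
    (∀ R : Submodule ℂ ↥B, R ≤ Bplus A B →
      (∀ x ∈ R, ∀ b ∈ Bplus A B, x * b ∈ R) →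
      ∀ x ∈ RdeltaRSet A B comulB R, x ∈ R) ∧
    -- (d) `δ_{R_δ} ≤ δ` for equivariant δ
    (∀ (M : Type) (_ : AddCommGroup M) (_ : Module ℂ M)
        (δ : BimodDeriv ↥B M), IsEquivariant A B comulB δ →
      ∀ L : List (↥B × ↥B),
        (L.map fun p => δ.l p.1 (δ.d p.2)).sum = 0 →
        (L.map fun p => PhiE A B comulB p.1 p.2).sum
          ∈ AOx A ((Submodule.span ℂ (RdeltaSet A B δ)).map B.val.toLinearMap)) ∧
    -- `R_{δ_{R_δ}} = R_δ` for equivariant δ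
    (∀ (M : Type) (_ : AddCommGroup M) (_ : Module ℂ M)
        (δ : BimodDeriv ↥B M), IsEquivariant A B comulB δ →
      RdeltaRSet A B comulB (Submodule.span ℂ (RdeltaSet A B δ))
        = RdeltaSet A B δ) ∧
    -- `δ_{R_{δ_R}} = δ_R` for every right ideal R of B⁺
    (∀ R : Submodule ℂ ↥B, R ≤ Bplus A B →
      (∀ x ∈ R, ∀ b ∈ Bplus A B, x * b ∈ R) →
      ∀ L : List (↥B × ↥B),
        ((L.map fun p => PhiE A B comulB p.1 p.2).sum
            ∈ AOx A ((Submodule.span ℂ (RdeltaRSet A B comulB R)).map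
                B.val.toLinearMap) ↔
         (L.map fun p => PhiE A B comulB p.1 p.2).sum
            ∈ AOx A (R.map B.val.toLinearMap))) := by
  refine ⟨?_, ?_, ?_, ?_, ?_, ?_⟩
  · intro R R' _ _ _ _ hRR' L h
    exact AOx_mono A (Submodule.map_mono hRR') h
  · intro M M' _ _ _ _ δ δ' hle x hx
    obtain ⟨L, h0, hxe⟩ := hx
    exact ⟨L, hle L h0, hxe⟩
  · intro R _ _ x hx
    obtain ⟨L, hmem, hxe⟩ := hx
    rw [hxe]
    exact coreC hcomulB R L hmem
  · intro M _ _ δ hequiv L hL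
    exact coreD hcomulB δ hequiv L hL
  · intro M _ _ δ hequiv
    ext x
    constructor
    · rintro ⟨L, hmem, hxe⟩
      have hx : x ∈ Submodule.span ℂ (RdeltaSet A B δ) := by
        rw [hxe]
        exact coreC hcomulB _ L hmem
      rw [span_RdeltaSet] at hx
      exact hx
    · rintro ⟨L, h0, hxe⟩
      exact ⟨L, coreD hcomulB δ hequiv L h0, hxe⟩
  · intro R _ _ L
    constructor
    · intro h
      refine AOx_mono A (Submodule.map_mono ?_) h
      rw [Submodule.span_le]
      rintro x ⟨L', hm, hx'⟩
      rw [hx']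
      exact coreC hcomulB R L' hm
    · intro h
      exact coreF hcomulB R L h

end
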